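/- The functor Υ : R-Mod → ((R-mod)^op, Ab) that sends a left R-module M to the restricted Hom functor Hom_R(-, M) (restricted along the inclusion of finitely presented modules) is fully faithful. -/

import Mathlib

open CategoryTheory CategoryTheory.Limits

universe u
variable (R : Type u) [Ring R]

/-- The category of finitely presented left `R`-modules. -/
abbrev fpMod := ObjectProperty.FullSubcategory (fun M : ModuleCat.{u} R => Module.FinitePresentation R M)

/-- The category `((R-mod)ᵒᵖ, Ab)` of contravariant functors on finitely presented
modules (ambient functor category). -/
abbrev CFun := (fpMod R)ᵒᵖ ⥤ AddCommGrpCat.{u}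

/-- The functor `Υ : R-Mod ⟶ ((R-mod)ᵒᵖ, Ab)`, sending `M` to the restricted Hom
functor `Hom_R(-, M)`. -/
noncomputable def Upsilon : ModuleCat.{u} R ⥤ CFun R :=
  preadditiveYoneda ⋙ (Functor.whiskeringLeft _ _ _).obj (ObjectProperty.ι _).op

def RRfp : fpMod R := ⟨ModuleCat.of R R, (inferInstance : Module.FinitePresentation R R)⟩

abbrev elHom {M : ModuleCat.{u} R} {N : fpMod R}
    (t : ((Upsilon R).obj M).obj (Opposite.op N)) : N.obj ⟶ M := t

abbrev homEl {M : ModuleCat.{u} R} {N : fpMod R}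
    (t : N.obj ⟶ M) : ((Upsilon R).obj M).obj (Opposite.op N) := t

lemma key_nat {M M' : ModuleCat.{u} R} (η : (Upsilon R).obj M ⟶ (Upsilon R).obj M')
    {N N' : fpMod R} (g : N'.obj ⟶ N.obj) (x : N.obj ⟶ M) :
    elHom R (η.app (Opposite.op N') (homEl R (g ≫ x))) =
      g ≫ elHom R (η.app (Opposite.op N) (homEl R x)) := by
  exact congrFun (congrArg (fun (t : _ ⟶ _) => (t : _ → _))
    (η.naturality (Quiver.Hom.op (X := N') (Y := N) (ObjectProperty.homMk g)))) (homEl R x)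

abbrev toSpan {N : ModuleCat.{u} R} (n : N) : (RRfp R).obj ⟶ N :=
  ModuleCat.ofHom (LinearMap.toSpanSingleton R N n)

/-- the functor `Υ` is fully faithful. -/
theorem stmt1 : (Upsilon R).Full ∧ (Upsilon R).Faithful := by
  have key : ∀ {M M' : ModuleCat.{u} R} (η : (Upsilon R).obj M ⟶ (Upsilon R).obj M'),
      (Upsilon R).map (ModuleCat.ofHom
        { toFun := fun m => elHom R (η.app (Opposite.op (RRfp R)) (homEl R (toSpan R m))) (1 : R)
          map_add' := by
            intro a b
            have h : toSpan R (a + b) = toSpan R a + toSpan R b := by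
              apply ModuleCat.hom_ext; apply LinearMap.ext; intro s
              exact smul_add (show R from s) a b
            have h2 : homEl R (N := RRfp R) (toSpan R (a + b)) =
                homEl R (toSpan R a) + homEl R (toSpan R b) := congrArg _ h
            show elHom R (η.app (Opposite.op (RRfp R)) (homEl R (toSpan R (a + b)))) (1 : R) = _
            rw [h2, map_add]
            rfl
          map_smul' := by
            intro r m
            have h : toSpan R (r • m) = (toSpan R r : (RRfp R).obj ⟶ (RRfp R).obj) ≫ toSpan R m := by
              apply ModuleCat.hom_ext; apply LinearMap.ext; intro s
              exact (mul_smul (show R from s) r m).symm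
            show elHom R (η.app (Opposite.op (RRfp R)) (homEl R (toSpan R (r • m)))) (1 : R) = _
            rw [h]
            have := congrFun (congrArg (fun (t : (RRfp R).obj ⟶ M') => (t : _ → _))
              (key_nat R η (toSpan R r) (toSpan R m))) (1 : R)
            simp only at this
            rw [this]
            show elHom R (η.app _ (homEl R (toSpan R m))) ((1 : R) • r) = _
            rw [one_smul, show r = r • (1 : R) by simp]
            exact ((elHom R (η.app _ (homEl R (toSpan R m)))).hom.map_smul r (1 : R)).trans (by simp) }) = η := by
    intro M M' η
    apply NatTrans.ext
    funext N
    apply AddCommGrpCat.hom_ext; apply AddMonoidHom.ext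
    intro x
    show homEl R (elHom R (M := M) (N := N.unop) x ≫ _) = η.app N x
    apply ModuleCat.hom_ext; apply LinearMap.ext
    intro n
    set x' : N.unop.obj ⟶ M := elHom R (M := M) (N := N.unop) x with hx'
    have h : toSpan R (x' n) = toSpan R n ≫ x' := by
      apply ModuleCat.hom_ext; apply LinearMap.ext; intro s
      exact (x'.hom.map_smul (show R from s) n).symm
    have h2 := key_nat R η (toSpan R n) x'
    have h3 := congrFun (congrArg (fun (t : (RRfp R).obj ⟶ M') => (t : _ → _)) h2) (1 : R)
    simp only at h3
    show elHom R (η.app (Opposite.op (RRfp R)) (homEl R (toSpan R (x' n)))) (1 : R) =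
      elHom R (η.app N x') n
    rw [h]
    refine h3.trans ?_
    show elHom R (η.app N x') ((1 : R) • n) = _
    rw [one_smul]
  constructor
  · exact ⟨fun η => ⟨_, key η⟩⟩
  · constructor
    intro M M' f g h
    apply ModuleCat.hom_ext; apply LinearMap.ext
    intro m
    have h2 := congrArg (fun (t : (Upsilon R).obj M ⟶ (Upsilon R).obj M') =>
      elHom R (t.app (Opposite.op (RRfp R)) (homEl R (toSpan R m))) (1 : R)) h
    simp only at h2
    have e1 : elHom R (((Upsilon R).map f).app (Opposite.op (RRfp R)) (homEl R (toSpan R m))) (1 : R)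
        = f ((1 : R) • m) := rfl
    have e2 : elHom R (((Upsilon R).map g).app (Opposite.op (RRfp R)) (homEl R (toSpan R m))) (1 : R)
        = g ((1 : R) • m) := rfl
    rw [e1, e2, one_smul] at h2
    exact h2
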